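/- (Quotient property of Schur complements.) Let M ≥ 0 be an n×n operator matrix (or an n×n positive semidefinite complex matrix) and let J ⊆ K ⊆ {0,…,n-1}. Then S(M; J) = S(S(M; K); J), where Schur complements are viewed as n×n matrices padded with zeros outside the indexing set. -/

import Mathlib

open scoped ComplexOrder
/-- `S` is the Schur complement of the positive semidefinite matrix `M` supported on the
rows and columns in `Λ`: the largest positive semidefinite matrix vanishing outside
`Λ × Λ` such that `M - S` is positive semidefinite. -/
def IsSchurCompl {n : ℕ} (M : Matrix (Fin n) (Fin n) ℂ) (Λ : Set (Fin n))
    (S : Matrix (Fin n) (Fin n) ℂ) : Prop :=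
  S.PosSemidef ∧ (∀ i j, i ∉ Λ ∨ j ∉ Λ → S i j = 0) ∧ (M - S).PosSemidef ∧
    ∀ X : Matrix (Fin n) (Fin n) ℂ, X.PosSemidef → (∀ i j, i ∉ Λ ∨ j ∉ Λ → X i j = 0) →
      (M - X).PosSemidef → (S - X).PosSemidef

open Matrix in
lemma psd_neg_eq_zero {n : ℕ} {A : Matrix (Fin n) (Fin n) ℂ}
    (hA : A.PosSemidef) (hA' : (-A).PosSemidef) : A = 0 := by
  have hz : ∀ x : Fin n → ℂ, A *ᵥ x = 0 := by
    intro x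
    rw [← hA.dotProduct_mulVec_zero_iff]
    have h1 := hA.dotProduct_mulVec_nonneg x
    have h2 := hA'.dotProduct_mulVec_nonneg x
    rw [Matrix.neg_mulVec, dotProduct_neg] at h2
    exact le_antisymm (neg_nonneg.mp h2) h1
  ext i j
  have := congrFun (hz (Pi.single j 1)) i
  simpa [Matrix.mulVec_single] using this

/-- Quotient property of Schur complements: for `J ⊆ K`, `S(M;J) = S(S(M;K);J)`. -/
theorem schur_compl_quotient {n : ℕ} (M : Matrix (Fin n) (Fin n) ℂ)
    (J K : Set (Fin n)) (hJK : J ⊆ K) (hM : M.PosSemidef)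
    (SK SJ S' : Matrix (Fin n) (Fin n) ℂ)
    (hSK : IsSchurCompl M K SK) (hSJ : IsSchurCompl M J SJ)
    (hS' : IsSchurCompl SK J S') :
    SJ = S' := by
  obtain ⟨hSKp, hSKs, hMSK, hSKmax⟩ := hSK
  obtain ⟨hSJp, hSJs, hMSJ, hSJmax⟩ := hSJ
  obtain ⟨hS'p, hS's, hSKS', hS'max⟩ := hS'
  -- SK - SJ is PSD, since SJ supported on J ⊆ K
  have hSKSJ : (SK - SJ).PosSemidef :=
    hSKmax SJ hSJp (fun i j h => hSJs i j (h.imp (fun hi hK => hi (hJK hK)) (fun hj hK => hj (hJK hK)))) hMSJ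
  -- hence SJ is a candidate for S', so S' - SJ PSD
  have h1 : (S' - SJ).PosSemidef := hS'max SJ hSJp hSJs hSKSJ
  -- M - S' = (M - SK) + (SK - S') PSD, so S' is a candidate for SJ
  have hMS' : (M - S').PosSemidef := by
    have := hMSK.add hSKS'
    simpa [sub_add_sub_cancel] using this
  have h2 : (SJ - S').PosSemidef := hSJmax S' hS'p hS's hMS'
  have := psd_neg_eq_zero h2 (by simpa [neg_sub] using h1)
  have := sub_eq_zero.mp this
  exact this
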